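/- For every n ≥ 4, the n-dimensional spined cube SQ_n contains two edge-disjoint Hamiltonian cycles. -/

import Mathlib

set_option maxRecDepth 4000


/-- The "difference vector" of the neighbor rules of the spined cube, `i` being the
0-based index of the flipped bit. -/
def sqDelta (n : ℕ) (x : Fin n → ZMod 2) (i : Fin n) : Fin n → ZMod 2 :=
  fun j =>
    (if j = i then 1 else 0) +
    (if i.val + 5 ≤ n then
      (if j.val = i.val + 1 then x ⟨n - 2, by have := i.isLt; omega⟩ else 0) +
      (if j.val = i.val + 2 then x ⟨n - 1, by have := i.isLt; omega⟩ else 0)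
    else if n ≤ i.val + 2 then 0
    else (if j.val = i.val + 1 then x ⟨n - 1, by have := i.isLt; omega⟩ else 0))

/-- The `n`-dimensional spined cube `SQ_n`. -/
def spinedCube (n : ℕ) : SimpleGraph (Fin n → ZMod 2) :=
  SimpleGraph.fromRel (fun x y => ∃ i : Fin n, y = x + sqDelta n x i)

namespace SQAux
open SimpleGraph Walk

abbrev Vtx (n : ℕ) := Fin n → ZMod 2

lemma adj_of_rel {n : ℕ} {x y : Vtx n} (hne : x ≠ y) (i : Fin n)
    (h : y = x + sqDelta n x i) : (spinedCube n).Adj x y := by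
  rw [spinedCube, SimpleGraph.fromRel_adj]
  exact ⟨hne, Or.inl ⟨i, h⟩⟩

lemma sqDelta_succ {m : ℕ} (hm : 2 ≤ m) (b : ZMod 2) (x : Vtx m) (i : Fin m) :
    sqDelta (m+1) (Fin.cons b x) i.succ = Fin.cons 0 (sqDelta m x i) := by
  have hidx1 : (⟨m+1-2, by omega⟩ : Fin (m+1)) = Fin.succ ⟨m-2, by omega⟩ := by
    apply Fin.ext; simp; omega
  have hidx2 : (⟨m+1-1, by omega⟩ : Fin (m+1)) = Fin.succ ⟨m-1, by omega⟩ := by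
    apply Fin.ext; simp; omega
  funext j
  refine Fin.cases ?_ ?_ j
  · simp only [sqDelta, Fin.cons_zero, Fin.val_zero, Fin.val_succ]
    rw [if_neg (fun h => (Fin.succ_ne_zero i) h.symm)]
    split_ifs <;> first | exact (by assumption : False).elim | omega | norm_num
  · intro j
    simp only [sqDelta, Fin.cons_succ, Fin.val_succ, hidx1, hidx2]
    have hji : (j.succ = i.succ) ↔ (j = i) :=
      ⟨fun h => Fin.succ_injective _ h, fun h => by rw [h]⟩
    have e1 : (i.val + 1 + 5 ≤ m + 1) ↔ (i.val + 5 ≤ m) := by omega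
    have e2 : (j.val + 1 = i.val + 1 + 1) ↔ (j.val = i.val + 1) := by omega
    have e3 : (j.val + 1 = i.val + 1 + 2) ↔ (j.val = i.val + 2) := by omega
    have e4 : (m + 1 ≤ i.val + 1 + 2) ↔ (m ≤ i.val + 2) := by omega
    simp only [hji, e1, e2, e3, e4]

lemma adj_cons {m : ℕ} (hm : 2 ≤ m) (b : ZMod 2) {x y : Vtx m}
    (h : (spinedCube m).Adj x y) :
    (spinedCube (m+1)).Adj (Fin.cons b x) (Fin.cons b y) := by
  rw [spinedCube, SimpleGraph.fromRel_adj] at h ⊢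
  obtain ⟨hne, hrel⟩ := h
  refine ⟨fun hc => hne (funext fun k => by simpa using congrFun hc k.succ), ?_⟩
  have key : ∀ (u v : Vtx m), (∃ i : Fin m, v = u + sqDelta m u i) →
      ∃ i : Fin (m+1), Fin.cons b v = Fin.cons b u + sqDelta (m+1) (Fin.cons b u) i := by
    rintro u v ⟨i, hi⟩
    refine ⟨i.succ, ?_⟩
    rw [sqDelta_succ hm b u i]
    funext j
    refine Fin.cases ?_ ?_ j
    · simp
    · intro j
      simp [Fin.cons_succ, hi]
  rcases hrel with h | h
  · exact Or.inl (key x y h)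
  · exact Or.inr (key y x h)

/-- The graph homomorphism prepending bit `b`. -/
def ιHom {m : ℕ} (hm : 2 ≤ m) (b : ZMod 2) : spinedCube m →g spinedCube (m+1) :=
  ⟨fun x => Fin.cons b x, fun h => adj_cons hm b h⟩

lemma adj_cross {m : ℕ} (hm : 4 ≤ m) (x : Vtx m)
    (h2 : x ⟨m-2, by omega⟩ = 0) (h1 : x ⟨m-1, by omega⟩ = 0) :
    (spinedCube (m+1)).Adj (Fin.cons 0 x) (Fin.cons 1 x) := by
  have hne : (Fin.cons 0 x : Vtx (m+1)) ≠ Fin.cons 1 x := by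
    intro hc
    have := congrFun hc 0
    simp at this
  refine adj_of_rel hne ⟨0, by omega⟩ ?_
  have hidx1 : (⟨m+1-2, by omega⟩ : Fin (m+1)) = Fin.succ ⟨m-2, by omega⟩ := by
    apply Fin.ext; simp; omega
  have hidx2 : (⟨m+1-1, by omega⟩ : Fin (m+1)) = Fin.succ ⟨m-1, by omega⟩ := by
    apply Fin.ext; simp; omega
  funext j
  refine Fin.cases ?_ ?_ j
  · simp only [sqDelta, Fin.cons_zero, Pi.add_apply, Fin.val_zero]
    rw [if_pos (show (0 : Fin (m+1)) = ⟨0, by omega⟩ from Fin.ext (by simp))]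
    rw [if_pos (by omega : (0:ℕ) + 5 ≤ m + 1)]
    simp
  · intro j
    simp only [sqDelta, Fin.cons_succ, Pi.add_apply, Fin.val_succ, hidx1, hidx2]
    rw [if_neg (fun hc => absurd (congrArg Fin.val hc) (by simp))]
    rw [if_pos (by omega : (0:ℕ) + 5 ≤ m + 1)]
    split_ifs <;> simp [h1, h2]

variable {m : ℕ}


lemma isHamiltonianCycle_of' {V : Type*} [DecidableEq V] {G : SimpleGraph V} {u : V}
    (p : G.Walk u u) (hne : p ≠ .nil) (hedges : p.edges.Nodup)
    (hcount : ∀ a, p.support.tail.count a = 1) : p.IsHamiltonianCycle := by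
  rw [Walk.isHamiltonianCycle_iff_isCycle_and_support_count_tail_eq_one]
  exact ⟨⟨⟨(Walk.isTrail_def _).2 hedges, hne⟩,
    List.nodup_iff_count_le_one.2 (fun a => le_of_eq (hcount a))⟩, hcount⟩

def cns (b : ZMod 2) (x : Vtx m) : Vtx (m+1) := Fin.cons b x

@[simp] lemma cns_zero (b : ZMod 2) (x : Vtx m) : cns b x 0 = b := rfl
@[simp] lemma cns_succ (b : ZMod 2) (x : Vtx m) (i : Fin m) : cns b x i.succ = x i := by
  simp [cns]

lemma consInj (b : ZMod 2) : Function.Injective (cns (m := m) b) := by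
  intro x y h
  funext k
  simpa using congrFun h k.succ

lemma coord0_of_mem_map {b : ZMod 2} {e : Sym2 (Vtx m)} {z : Vtx (m+1)}
    (hz : z ∈ Sym2.map (cns b) e) : z 0 = b := by
  induction e with
  | _ x y =>
    rw [Sym2.map_pair_eq, Sym2.mem_iff] at hz
    rcases hz with h | h <;> rw [h] <;> simp

lemma cross_ne_map (x : Vtx m) (b : ZMod 2) (e : Sym2 (Vtx m)) :
    s(cns 0 x, cns 1 x) ≠ Sym2.map (cns b) e := by
  intro h
  have hb : ∀ c : ZMod 2, c = 0 ∨ c = 1 := by decide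
  rcases hb b with rfl | rfl
  · have : cns 1 x 0 = 0 :=
      coord0_of_mem_map (h ▸ Sym2.mem_mk_right _ _)
    simp at this
  · have : cns 0 x 0 = 1 :=
      coord0_of_mem_map (h ▸ Sym2.mem_mk_left _ _)
    simp at this

lemma map0_ne_map1 (e e' : Sym2 (Vtx m)) :
    Sym2.map (cns 0) e ≠ Sym2.map (cns 1) e' := by
  induction e with
  | _ x y =>
    intro h
    have : cns 0 x 0 = 1 := by
      apply coord0_of_mem_map (b := 1)
      rw [← h, Sym2.map_pair_eq]
      exact Sym2.mem_mk_left _ _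
    simp at this

lemma cross_inj {x y : Vtx m} (h : s(cns 0 x, cns 1 x) = s(cns 0 y, cns 1 y)) :
    x = y := by
  rw [Sym2.eq_iff] at h
  rcases h with ⟨h1, _⟩ | ⟨h1, _⟩
  · exact consInj 0 h1
  · have := congrFun h1 0; simp at this



@[simp] lemma iota_coe (hm : 2 ≤ m) (b : ZMod 2) : ⇑(ιHom hm b) = cns (m := m) b := rfl

section Glue

variable {u v : Vtx m}

/-- The spliced double cycle: `cns 0 u → cns 1 u →(rev P) cns 1 v → cns 0 v →(P) cns 0 u`. -/
def glue (hm : 4 ≤ m) (huv : (spinedCube m).Adj u v) (P : (spinedCube m).Walk v u)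
    (hu2 : ∀ h : m-2 < m, u ⟨m-2, h⟩ = 0) (hu1 : ∀ h : m-1 < m, u ⟨m-1, h⟩ = 0)
    (hv2 : ∀ h : m-2 < m, v ⟨m-2, h⟩ = 0) (hv1 : ∀ h : m-1 < m, v ⟨m-1, h⟩ = 0) :
    (spinedCube (m+1)).Walk (cns 0 u) (cns 0 u) :=
  Walk.cons (adj_cross hm u (hu2 (by omega)) (hu1 (by omega)))
    ((P.reverse.map (ιHom (by omega) 1)).append
      (Walk.cons ((adj_cross hm v (hv2 (by omega)) (hv1 (by omega))).symm)
        (P.map (ιHom (by omega) 0))))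

variable (hm : 4 ≤ m) (huv : (spinedCube m).Adj u v) (P : (spinedCube m).Walk v u)
    (hu2 : ∀ h : m-2 < m, u ⟨m-2, h⟩ = 0) (hu1 : ∀ h : m-1 < m, u ⟨m-1, h⟩ = 0)
    (hv2 : ∀ h : m-2 < m, v ⟨m-2, h⟩ = 0) (hv1 : ∀ h : m-1 < m, v ⟨m-1, h⟩ = 0)

lemma glue_support :
    (glue hm huv P hu2 hu1 hv2 hv1).support =
      cns 0 u :: (P.support.reverse.map (cns 1) ++ P.support.map (cns 0)) := by
  unfold glue; erw [Walk.support_cons, Walk.support_append, Walk.support_cons, Walk.support_map, Walk.support_map, Walk.support_reverse]; simp [List.map_reverse]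

lemma glue_edges :
    (glue hm huv P hu2 hu1 hv2 hv1).edges =
      s(cns 0 u, cns 1 u) :: (P.edges.reverse.map (Sym2.map (cns 1)) ++
        s(cns 1 v, cns 0 v) :: P.edges.map (Sym2.map (cns 0))) := by
  unfold glue; erw [Walk.edges_cons, Walk.edges_append, Walk.edges_cons, Walk.edges_map, Walk.edges_map, Walk.edges_reverse]; simp [List.map_reverse, cns]

lemma glue_count (hP : ∀ a, P.support.count a = 1) :
    ∀ a, (glue hm huv P hu2 hu1 hv2 hv1).support.tail.count a = 1 := by
  intro a
  rw [glue_support, List.tail_cons, List.count_append]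
  have ha : cns (a 0) (Fin.tail a) = a := Fin.cons_self_tail a
  have hb : ∀ c : ZMod 2, c = 0 ∨ c = 1 := by decide
  have key : ∀ (b b' : ZMod 2) (t : Vtx m) (L : List (Vtx m)), b ≠ b' →
      (L.map (cns b')).count (cns b t) = 0 := by
    intro b b' t L hbb
    rw [List.count_eq_zero]
    intro hmem
    obtain ⟨w, _, hw⟩ := List.mem_map.1 hmem
    exact hbb (by simpa using (congrFun hw 0).symm)
  have keq : ∀ (b : ZMod 2) (t : Vtx m) (L : List (Vtx m)),
      (L.map (cns b)).count (cns b t) = L.count t := by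
    intro b t L
    exact List.count_map_of_injective L (cns b) (consInj b) t
  rw [← ha]
  rcases hb (a 0) with h0 | h0 <;> rw [h0]
  · rw [key 0 1 _ _ (by decide), keq]
    simpa using hP _
  · rw [key 1 0 _ _ (by decide), keq, List.count_reverse]
    simpa using hP _

lemma glue_edges_nodup (hPn : (s(u,v) :: P.edges).Nodup) :
    (glue hm huv P hu2 hu1 hv2 hv1).edges.Nodup := by
  rw [glue_edges]
  obtain ⟨huvP, hPe⟩ := List.nodup_cons.1 hPn
  refine List.nodup_cons.2 ⟨?_, ?_⟩
  · intro hmem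
    rcases List.mem_append.1 hmem with h | h
    · obtain ⟨e0, _, he⟩ := List.mem_map.1 h
      exact cross_ne_map u 1 e0 he.symm
    · rcases List.mem_cons.1 h with h | h
      · rw [Sym2.eq_swap (a := cns 1 v)] at h
        exact huv.ne (cross_inj h)
      · obtain ⟨e0, _, he⟩ := List.mem_map.1 h
        exact cross_ne_map u 0 e0 he.symm
  · refine List.Nodup.append ?_ ?_ ?_
    · exact (List.nodup_reverse.2 hPe).map (Sym2.map.injective (consInj 1))
    · refine List.nodup_cons.2 ⟨?_, hPe.map (Sym2.map.injective (consInj 0))⟩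
      intro h
      obtain ⟨e0, _, he⟩ := List.mem_map.1 h
      rw [Sym2.eq_swap] at he
      exact cross_ne_map v 0 e0 he.symm
    · intro e he1 he2
      obtain ⟨e0, _, he⟩ := List.mem_map.1 he1
      rcases List.mem_cons.1 he2 with h | h
      · rw [← he, Sym2.eq_swap] at h
        exact cross_ne_map v 1 e0 h.symm
      · obtain ⟨e1, _, he'⟩ := List.mem_map.1 h
        exact map0_ne_map1 e1 e0 (by rw [he', ← he])

lemma glue_isHamCycle (hC : (Walk.cons huv P).IsHamiltonianCycle) :
    (glue hm huv P hu2 hu1 hv2 hv1).IsHamiltonianCycle := by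
  have hP : ∀ a, P.support.count a = 1 := by
    have h := (Walk.isHamiltonianCycle_iff_isCycle_and_support_count_tail_eq_one.1 hC).2
    intro a
    simpa using h a
  have hPn : (s(u,v) :: P.edges).Nodup := by
    have := hC.isCycle.isCircuit.isTrail.edges_nodup
    simpa [Walk.edges_cons] using this
  refine isHamiltonianCycle_of' _ ?_ (glue_edges_nodup hm huv P hu2 hu1 hv2 hv1 hPn)
    (glue_count hm huv P hu2 hu1 hv2 hv1 hP)
  unfold glue
  intro h; cases h

lemma glue_edges_mem {e : Sym2 (Vtx (m+1))} (he : e ∈ (glue hm huv P hu2 hu1 hv2 hv1).edges) :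
    e = s(cns 0 u, cns 1 u) ∨ e = s(cns 0 v, cns 1 v) ∨
      ∃ e0 ∈ P.edges, e = Sym2.map (cns 1) e0 ∨ e = Sym2.map (cns 0) e0 := by
  rw [glue_edges] at he
  rcases List.mem_cons.1 he with h | h
  · exact Or.inl h
  rcases List.mem_append.1 h with h | h
  · obtain ⟨e0, h0, he'⟩ := List.mem_map.1 h
    exact Or.inr (Or.inr ⟨e0, List.mem_reverse.1 h0, Or.inl he'.symm⟩)
  rcases List.mem_cons.1 h with h | h
  · exact Or.inr (Or.inl (by rw [h, Sym2.eq_swap]))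
  · obtain ⟨e0, h0, he'⟩ := List.mem_map.1 h
    exact Or.inr (Or.inr ⟨e0, h0, Or.inr he'.symm⟩)

end Glue

lemma glue_disjoint {u v p q : Vtx m}
    (hm : 4 ≤ m) (huv : (spinedCube m).Adj u v) (hpq : (spinedCube m).Adj p q)
    (P : (spinedCube m).Walk v u) (Q : (spinedCube m).Walk q p)
    (hu2 : ∀ h : m-2 < m, u ⟨m-2, h⟩ = 0) (hu1 : ∀ h : m-1 < m, u ⟨m-1, h⟩ = 0)
    (hv2 : ∀ h : m-2 < m, v ⟨m-2, h⟩ = 0) (hv1 : ∀ h : m-1 < m, v ⟨m-1, h⟩ = 0)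
    (hp2 : ∀ h : m-2 < m, p ⟨m-2, h⟩ = 0) (hp1 : ∀ h : m-1 < m, p ⟨m-1, h⟩ = 0)
    (hq2 : ∀ h : m-2 < m, q ⟨m-2, h⟩ = 0) (hq1 : ∀ h : m-1 < m, q ⟨m-1, h⟩ = 0)
    (hdisj : ∀ e ∈ (Walk.cons huv P).edges, e ∉ (Walk.cons hpq Q).edges)
    (hup : u ≠ p) (huq : u ≠ q) (hvp : v ≠ p) (hvq : v ≠ q) :
    ∀ e ∈ (glue hm huv P hu2 hu1 hv2 hv1).edges,
      e ∉ (glue hm hpq Q hp2 hp1 hq2 hq1).edges := by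
  intro e he1 he2
  have h1 := glue_edges_mem hm huv P hu2 hu1 hv2 hv1 he1
  have h2 := glue_edges_mem hm hpq Q hp2 hp1 hq2 hq1 he2
  have hPsub : ∀ e0, e0 ∈ P.edges → e0 ∈ (Walk.cons huv P).edges := by
    intro e0 h; rw [Walk.edges_cons]; exact List.mem_cons_of_mem _ h
  have hQsub : ∀ e0, e0 ∈ Q.edges → e0 ∈ (Walk.cons hpq Q).edges := by
    intro e0 h; rw [Walk.edges_cons]; exact List.mem_cons_of_mem _ h
  have cross_case : ∀ (x y : Vtx m), x ≠ y → e = s(cns 0 x, cns 1 x) →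
      e = s(cns 0 y, cns 1 y) → False := by
    intro x y hxy hx hy
    exact hxy (cross_inj (hx ▸ hy))
  rcases h1 with h1 | h1 | ⟨e0, he0, h1⟩ <;> rcases h2 with h2 | h2 | ⟨e1, he1', h2⟩
  · exact cross_case u p hup h1 h2
  · exact cross_case u q huq h1 h2
  · rcases h2 with h2 | h2
    · exact cross_ne_map _ 1 e1 (h1 ▸ h2 : s(cns 0 u, cns 1 u) = _)
    · exact cross_ne_map _ 0 e1 (h1 ▸ h2 : s(cns 0 u, cns 1 u) = _)
  · exact cross_case v p hvp h1 h2
  · exact cross_case v q hvq h1 h2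
  · rcases h2 with h2 | h2
    · exact cross_ne_map _ 1 e1 (h1 ▸ h2 : s(cns 0 v, cns 1 v) = _)
    · exact cross_ne_map _ 0 e1 (h1 ▸ h2 : s(cns 0 v, cns 1 v) = _)
  · rcases h1 with h1 | h1
    · exact cross_ne_map _ 1 e0 (h2 ▸ h1 : s(cns 0 p, cns 1 p) = _)
    · exact cross_ne_map _ 0 e0 (h2 ▸ h1 : s(cns 0 p, cns 1 p) = _)
  · rcases h1 with h1 | h1
    · exact cross_ne_map _ 1 e0 (h2 ▸ h1 : s(cns 0 q, cns 1 q) = _)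
    · exact cross_ne_map _ 0 e0 (h2 ▸ h1 : s(cns 0 q, cns 1 q) = _)
  · rcases h1 with h1 | h1 <;> rcases h2 with h2 | h2
    · have : e0 = e1 := Sym2.map.injective (consInj 1) (h1.symm.trans h2)
      exact hdisj e0 (hPsub _ he0) (this ▸ hQsub _ he1')
    · exact map0_ne_map1 e1 e0 (h2.symm.trans h1)
    · exact map0_ne_map1 e0 e1 (h1.symm.trans h2)
    · have : e0 = e1 := Sym2.map.injective (consInj 0) (h1.symm.trans h2)
      exact hdisj e0 (hPsub _ he0) (this ▸ hQsub _ he1')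

structure Config (n : ℕ) : Type where
  hn : 4 ≤ n
  u : Vtx n
  v : Vtx n
  p : Vtx n
  q : Vtx n
  huv : (spinedCube n).Adj u v
  hpq : (spinedCube n).Adj p q
  P : (spinedCube n).Walk v u
  Q : (spinedCube n).Walk q p
  hC : (Walk.cons huv P).IsHamiltonianCycle
  hD : (Walk.cons hpq Q).IsHamiltonianCycle
  hdisj : ∀ e ∈ (Walk.cons huv P).edges, e ∉ (Walk.cons hpq Q).edges
  hu2 : ∀ h : n-2 < n, u ⟨n-2, h⟩ = 0
  hu1 : ∀ h : n-1 < n, u ⟨n-1, h⟩ = 0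
  hv2 : ∀ h : n-2 < n, v ⟨n-2, h⟩ = 0
  hv1 : ∀ h : n-1 < n, v ⟨n-1, h⟩ = 0
  hp2 : ∀ h : n-2 < n, p ⟨n-2, h⟩ = 0
  hp1 : ∀ h : n-1 < n, p ⟨n-1, h⟩ = 0
  hq2 : ∀ h : n-2 < n, q ⟨n-2, h⟩ = 0
  hq1 : ∀ h : n-1 < n, q ⟨n-1, h⟩ = 0
  hup : u ≠ p
  huq : u ≠ q
  hvp : v ≠ p
  hvq : v ≠ q

lemma cns_ne {b b' : ZMod 2} (x y : Vtx m) (hb : b ≠ b') : cns b x ≠ cns b' y := by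
  intro h
  exact hb (by simpa using congrFun h 0)

lemma block_step {n : ℕ} (hn : 4 ≤ n) (b : ZMod 2) (z : Vtx n)
    (h2 : ∀ h : n-2 < n, z ⟨n-2, h⟩ = 0) (h1 : ∀ h : n-1 < n, z ⟨n-1, h⟩ = 0) :
    (∀ h : (n+1)-2 < n+1, cns b z ⟨(n+1)-2, h⟩ = 0) ∧
      (∀ h : (n+1)-1 < n+1, cns b z ⟨(n+1)-1, h⟩ = 0) := by
  constructor
  · intro h
    have he : (⟨(n+1)-2, h⟩ : Fin (n+1)) = Fin.succ ⟨n-2, by omega⟩ := by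
      apply Fin.ext; simp; omega
    rw [he, cns_succ]
    exact h2 _
  · intro h
    have he : (⟨(n+1)-1, h⟩ : Fin (n+1)) = Fin.succ ⟨n-1, by omega⟩ := by
      apply Fin.ext; simp; omega
    rw [he, cns_succ]
    exact h1 _

lemma Config.h2lt {m : ℕ} (c : Config m) : m-2 < m := by have := c.hn; omega
lemma Config.h1lt {m : ℕ} (c : Config m) : m-1 < m := by have := c.hn; omega
lemma Config.hm2 {m : ℕ} (c : Config m) : 2 ≤ m := le_trans (by norm_num) c.hn

def Config.step {m : ℕ} (c : Config m) : Config (m+1) where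
  hn := le_trans c.hn (Nat.le_succ m)
  u := cns 0 c.u
  v := cns 1 c.u
  p := cns 0 c.p
  q := cns 1 c.p
  huv := adj_cross c.hn c.u (c.hu2 c.h2lt) (c.hu1 c.h1lt)
  hpq := adj_cross c.hn c.p (c.hp2 c.h2lt) (c.hp1 c.h1lt)
  P := (c.P.reverse.map (ιHom c.hm2 1)).append
      (Walk.cons ((adj_cross c.hn c.v (c.hv2 c.h2lt) (c.hv1 c.h1lt)).symm)
        (c.P.map (ιHom c.hm2 0)))
  Q := (c.Q.reverse.map (ιHom c.hm2 1)).append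
      (Walk.cons ((adj_cross c.hn c.q (c.hq2 c.h2lt) (c.hq1 c.h1lt)).symm)
        (c.Q.map (ιHom c.hm2 0)))
  hC := glue_isHamCycle c.hn c.huv c.P c.hu2 c.hu1 c.hv2 c.hv1 c.hC
  hD := glue_isHamCycle c.hn c.hpq c.Q c.hp2 c.hp1 c.hq2 c.hq1 c.hD
  hdisj := glue_disjoint c.hn c.huv c.hpq c.P c.Q c.hu2 c.hu1 c.hv2 c.hv1
    c.hp2 c.hp1 c.hq2 c.hq1 c.hdisj c.hup c.huq c.hvp c.hvq
  hu2 := (block_step c.hn 0 c.u c.hu2 c.hu1).1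
  hu1 := (block_step c.hn 0 c.u c.hu2 c.hu1).2
  hv2 := (block_step c.hn 1 c.u c.hu2 c.hu1).1
  hv1 := (block_step c.hn 1 c.u c.hu2 c.hu1).2
  hp2 := (block_step c.hn 0 c.p c.hp2 c.hp1).1
  hp1 := (block_step c.hn 0 c.p c.hp2 c.hp1).2
  hq2 := (block_step c.hn 1 c.p c.hp2 c.hp1).1
  hq1 := (block_step c.hn 1 c.p c.hp2 c.hp1).2
  hup := fun h => c.hup (consInj 0 h)
  huq := cns_ne _ _ (by decide)
  hvp := cns_ne _ _ (by decide)
  hvq := fun h => c.hup (consInj 1 h)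

instance (n : ℕ) : DecidableRel (spinedCube n).Adj := fun x y =>
  decidable_of_iff (x ≠ y ∧ ((∃ i, y = x + sqDelta n x i) ∨ (∃ i, x = y + sqDelta n y i)))
    (by rw [spinedCube, SimpleGraph.fromRel_adj])

def baseP : (spinedCube 4).Walk (![1,0,0,0]) (![0,0,0,0]) := (Walk.cons (show (spinedCube 4).Adj (![1,0,0,0]) (![1,0,1,0]) by decide) (Walk.cons (show (spinedCube 4).Adj (![1,0,1,0]) (![0,0,1,0]) by decide) (Walk.cons (show (spinedCube 4).Adj (![0,0,1,0]) (![0,1,1,0]) by decide) (Walk.cons (show (spinedCube 4).Adj (![0,1,1,0]) (![0,1,1,1]) by decide) (Walk.cons (show (spinedCube 4).Adj (![0,1,1,1]) (![1,0,1,1]) by decide) (Walk.cons (show (spinedCube 4).Adj (![1,0,1,1]) (![1,0,0,1]) by decide) (Walk.cons (show (spinedCube 4).Adj (![1,0,0,1]) (![1,1,1,1]) by decide) (Walk.cons (show (spinedCube 4).Adj (![1,1,1,1]) (![1,1,1,0]) by decide) (Walk.cons (show (spinedCube 4).Adj (![1,1,1,0]) (![1,1,0,0]) by decide) (Walk.cons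 (show (spinedCube 4).Adj (![1,1,0,0]) (![1,1,0,1]) by decide) (Walk.cons (show (spinedCube 4).Adj (![1,1,0,1]) (![0,0,0,1]) by decide) (Walk.cons (show (spinedCube 4).Adj (![0,0,0,1]) (![0,0,1,1]) by decide) (Walk.cons (show (spinedCube 4).Adj (![0,0,1,1]) (![0,1,0,1]) by decide) (Walk.cons (show (spinedCube 4).Adj (![0,1,0,1]) (![0,1,0,0]) by decide) (Walk.cons (show (spinedCube 4).Adj (![0,1,0,0]) (![0,0,0,0]) by decide) (Walk.nil : (spinedCube 4).Walk (![0,0,0,0]) (![0,0,0,0])))))))))))))))))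

def baseQ : (spinedCube 4).Walk (![1,1,0,0]) (![0,1,0,0]) := (Walk.cons (show (spinedCube 4).Adj (![1,1,0,0]) (![1,0,0,0]) by decide) (Walk.cons (show (spinedCube 4).Adj (![1,0,0,0]) (![1,0,0,1]) by decide) (Walk.cons (show (spinedCube 4).Adj (![1,0,0,1]) (![0,1,0,1]) by decide) (Walk.cons (show (spinedCube 4).Adj (![0,1,0,1]) (![0,1,1,1]) by decide) (Walk.cons (show (spinedCube 4).Adj (![0,1,1,1]) (![0,0,0,1]) by decide) (Walk.cons (show (spinedCube 4).Adj (![0,0,0,1]) (![0,0,0,0]) by decide) (Walk.cons (show (spinedCube 4).Adj (![0,0,0,0]) (![0,0,1,0]) by decide) (Walk.cons (show (spinedCube 4).Adj (![0,0,1,0]) (![0,0,1,1]) by decide) (Walk.cons (show (spinedCube 4).Adj (![0,0,1,1]) (![1,1,1,1]) by decide) (Walk.cons (show (spinedCube 4).Adj (![1,1,1,1]) (![1,1,0,1]) by decide) (Walk.cons (show (spinedCube 4).Adj (![1,1,0,1]) (![1,0,1,1]) by decide) (Walk.cons (show (spinedCube 4).Adj (![1,0,1,1]) (![1,0,1,0])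 by decide) (Walk.cons (show (spinedCube 4).Adj (![1,0,1,0]) (![1,1,1,0]) by decide) (Walk.cons (show (spinedCube 4).Adj (![1,1,1,0]) (![0,1,1,0]) by decide) (Walk.cons (show (spinedCube 4).Adj (![0,1,1,0]) (![0,1,0,0]) by decide) (Walk.nil : (spinedCube 4).Walk (![0,1,0,0]) (![0,1,0,0])))))))))))))))))

def baseConfig : Config 4 where
  hn := le_refl 4
  u := ![0,0,0,0]
  v := ![1,0,0,0]
  p := ![0,1,0,0]
  q := ![1,1,0,0]
  huv := by decide
  hpq := by decide
  P := baseP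
  Q := baseQ
  hC := isHamiltonianCycle_of' _ (by simp [baseP]) (by decide) (by decide)
  hD := isHamiltonianCycle_of' _ (by simp [baseQ]) (by decide) (by decide)
  hdisj := by decide
  hu2 := fun _ => rfl
  hu1 := fun _ => rfl
  hv2 := fun _ => rfl
  hv1 := fun _ => rfl
  hp2 := fun _ => rfl
  hp1 := fun _ => rfl
  hq2 := fun _ => rfl
  hq1 := fun _ => rfl
  hup := by decide
  huq := by decide
  hvp := by decide
  hvq := by decide


lemma config_exists : ∀ n, 4 ≤ n → Nonempty (Config n) := by
  intro n hn
  induction n, hn using Nat.le_induction with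
  | base => exact ⟨baseConfig⟩
  | succ m hm ih => exact ⟨ih.some.step⟩

end SQAux

/-- For every `n ≥ 4`, the spined cube `SQ_n` contains two edge-disjoint
Hamiltonian cycles. -/
theorem spinedCube_two_edge_disjoint_hamiltonian_cycles (n : ℕ) (hn : 4 ≤ n) :
    ∃ (v w : Fin n → ZMod 2) (c₁ : (spinedCube n).Walk v v)
      (c₂ : (spinedCube n).Walk w w),
      c₁.IsHamiltonianCycle ∧ c₂.IsHamiltonianCycle ∧
      ∀ e, e ∈ c₁.edges → e ∉ c₂.edges := by
  obtain ⟨c⟩ := SQAux.config_exists n hn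
  exact ⟨c.u, c.p, SimpleGraph.Walk.cons c.huv c.P, SimpleGraph.Walk.cons c.hpq c.Q, c.hC, c.hD, c.hdisj⟩
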